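/- Conditional pseudo-population factorization for partial stabilized weights (equation (B.4.1)): Assume (A2) and (A3). Then for every b̄ ∈ {0,1}^{K−m} with P(Ā(K−m−1)=b̄) > 0, every a̲, b̲ ∈ {0,1}^m, and every Borel set B ⊆ ℝ, writing ā = (b̄, a̲) ∈ {0,1}^K: 𝔼[W_psw^(m) · 1{Y^{ā} ∈ B} · 1{A̲(K−m) = b̲} · 1{Ā(K−m−1) = b̄}] = P(Y^{ā} ∈ B | Ā(K−m−1) = b̄) · P(A̲(K−m) = b̲ | Ā(K−m−1) = b̄) · P(Ā(K−m−1) = b̄). That is, after weighting by W_psw^(m), the potential outcome Y^{ā} and the recent treatment history A̲(K−m) are conditionally independent given the past treatment history Ā(K−m−1), with the original conditional marginal distributions. -/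

import Mathlib

open MeasureTheory Finset
open scoped Classical

namespace MSMPaper

noncomputable section

variable {Ω : Type*} [MeasurableSpace Ω] {𝓛 : Type*}

/-- Conditional probability `P(E | F) = P(E ∩ F) / P(F)` as a real number
(junk value `0` when `P F = 0`). -/
def cP (P : Measure Ω) (E F : Set Ω) : ℝ := (P (E ∩ F)).toReal / (P F).toReal

variable {K : ℕ}

/-- Event `Ā(t−1) = b̄` (treatment history up to, not including, time `t`). -/
def Apast (A : Fin K → Ω → Bool) (t : ℕ) (b : Fin K → Bool) : Set Ω :=
  {ω | ∀ k : Fin K, (k : ℕ) < t → A k ω = b k}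

/-- Event `L̄(t) = l̄` (covariate history up to and including time `t`). -/
def Lpast (L : Fin K → Ω → 𝓛) (t : ℕ) (l : Fin K → 𝓛) : Set Ω :=
  {ω | ∀ k : Fin K, (k : ℕ) ≤ t → L k ω = l k}

/-- Event `A̲(s, t−1) = b` (treatment history from time `s` up to, not including, `t`). -/
def Aseg (A : Fin K → Ω → Bool) (s t : ℕ) (b : Fin K → Bool) : Set Ω :=
  {ω | ∀ k : Fin K, s ≤ (k : ℕ) → (k : ℕ) < t → A k ω = b k}

/-- Event `A̲(K−m) = a̲` for a (last-`m`) treatment vector `as`. -/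
def EtrV (A : Fin K → Ω → Bool) (m : ℕ) (as : Fin K → Bool) : Set Ω :=
  {ω | ∀ k : Fin K, K - m ≤ (k : ℕ) → A k ω = as k}

/-- Event `A̲(K−m) = a_m` (constant `a` on the last `m` coordinates). -/
def Etr (A : Fin K → Ω → Bool) (m : ℕ) (a : Bool) : Set Ω :=
  EtrV A m (fun _ => a)

/-- Stabilized weights `W_sw`. -/
def Wsw (P : Measure Ω) (A : Fin K → Ω → Bool) (L : Fin K → Ω → 𝓛) : Ω → ℝ :=
  fun ω => ∏ k : Fin K,
    cP P {ω' | A k ω' = A k ω} (Apast A (k : ℕ) (fun j => A j ω)) /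
      cP P {ω' | A k ω' = A k ω}
        (Lpast L (k : ℕ) (fun j => L j ω) ∩ Apast A (k : ℕ) (fun j => A j ω))

/-- Restricted stabilized weights `W_rsw^(m)`. -/
def Wrsw (P : Measure Ω) (A : Fin K → Ω → Bool) (L : Fin K → Ω → 𝓛) (m : ℕ) : Ω → ℝ :=
  fun ω => ∏ k ∈ Finset.univ.filter (fun k : Fin K => K - m ≤ (k : ℕ)),
    cP P {ω' | A k ω' = A k ω} (Aseg A (K - m) (k : ℕ) (fun j => A j ω)) /
      cP P {ω' | A k ω' = A k ω}
        (Lpast L (k : ℕ) (fun j => L j ω) ∩ Apast A (k : ℕ) (fun j => A j ω))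

/-- Partial stabilized weights `W_psw^(m)`. -/
def Wpsw (P : Measure Ω) (A : Fin K → Ω → Bool) (L : Fin K → Ω → 𝓛) (m : ℕ) : Ω → ℝ :=
  fun ω => ∏ k ∈ Finset.univ.filter (fun k : Fin K => K - m ≤ (k : ℕ)),
    cP P {ω' | A k ω' = A k ω} (Apast A (k : ℕ) (fun j => A j ω)) /
      cP P {ω' | A k ω' = A k ω}
        (Lpast L (k : ℕ) (fun j => L j ω) ∩ Apast A (k : ℕ) (fun j => A j ω))

/-- IP-weighted contrast `θ_W^(m)`. -/
def θW (P : Measure Ω) (A : Fin K → Ω → Bool) (m : ℕ) (W Y : Ω → ℝ) : ℝ :=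
  (∫ ω in Etr A m true, W ω * Y ω ∂P) / (∫ ω in Etr A m true, W ω ∂P) -
    (∫ ω in Etr A m false, W ω * Y ω ∂P) / (∫ ω in Etr A m false, W ω ∂P)

/-- `rev j` is the time index `K − 1 − j`; the paper's coefficient `ψ_{j+1}`
multiplies `a(K − (j+1)) = a(rev j)`. -/
def rev (j : Fin K) : Fin K := ⟨K - 1 - (j : ℕ), by have := j.isLt; omega⟩

/-- `θ^(K) = 𝔼[Y^{1_K}] − 𝔼[Y^{0_K}]`. -/
def θKfull (P : Measure Ω) (Ypot : (Fin K → Bool) → Ω → ℝ) : ℝ :=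
  (∫ ω, Ypot (fun _ => true) ω ∂P) - ∫ ω, Ypot (fun _ => false) ω ∂P

/-- (A1) consistency. -/
def A1ok (A : Fin K → Ω → Bool) (Y : Ω → ℝ) (Ypot : (Fin K → Bool) → Ω → ℝ) : Prop :=
  ∀ (a : Fin K → Bool) (ω : Ω), (∀ k, A k ω = a k) → Y ω = Ypot a ω

/-- (A2) sequential exchangeability. -/
def A2ok (P : Measure Ω) (A : Fin K → Ω → Bool) (L : Fin K → Ω → 𝓛)
    (Ypot : (Fin K → Bool) → Ω → ℝ) : Prop :=
  ∀ (t : Fin K) (a : Fin K → Bool) (B : Set ℝ), MeasurableSet B →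
    ∀ (av : Bool) (l : Fin K → 𝓛) (b : Fin K → Bool),
      0 < P (Lpast L (t : ℕ) l ∩ Apast A (t : ℕ) b) →
      cP P ({ω | Ypot a ω ∈ B} ∩ {ω | A t ω = av}) (Lpast L (t : ℕ) l ∩ Apast A (t : ℕ) b) =
        cP P {ω | Ypot a ω ∈ B} (Lpast L (t : ℕ) l ∩ Apast A (t : ℕ) b) *
          cP P {ω | A t ω = av} (Lpast L (t : ℕ) l ∩ Apast A (t : ℕ) b)

/-- (A3) positivity. -/
def A3ok (P : Measure Ω) (A : Fin K → Ω → Bool) (L : Fin K → Ω → 𝓛) : Prop :=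
  ∀ (t : Fin K) (av : Bool) (l : Fin K → 𝓛) (b : Fin K → Bool),
    0 < P (Lpast L (t : ℕ) l ∩ Apast A (t : ℕ) b) →
    0 < cP P {ω | A t ω = av} (Lpast L (t : ℕ) l ∩ Apast A (t : ℕ) b)

/-- The marginal structural model `𝔼[Y^{ā}] = ψ₀ + Σ_{j=1}^K ψ_j a(K−j)`;
here `ψ j` is the paper's `ψ_{j+1}`, the coefficient of `a(K−1−j)`. -/
def MSMeq (P : Measure Ω) (Ypot : (Fin K → Bool) → Ω → ℝ) (ψ0 : ℝ) (ψ : Fin K → ℝ) : Prop :=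
  ∀ a : Fin K → Bool,
    (∫ ω, Ypot a ω ∂P) = ψ0 + ∑ j : Fin K, ψ j * (if a (rev j) = true then 1 else 0)

/-- (A5) conditional MSM given the past treatment history `Ā(K−m−1)`. -/
def A5ok (P : Measure Ω) (A : Fin K → Ω → Bool) (Ypot : (Fin K → Bool) → Ω → ℝ)
    (m : ℕ) : Prop :=
  ∀ b : Fin K → Bool, 0 < P (Apast A (K - m) b) →
    ∃ (φ0 : ℝ) (φ : Fin K → ℝ), ∀ a : Fin K → Bool,
      (∫ ω in Apast A (K - m) b, Ypot a ω ∂P) / (P (Apast A (K - m) b)).toReal =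
        φ0 + ∑ j : Fin K, φ j * (if a (rev j) = true then 1 else 0)

/-- `q_{j+1} = P(A(K−1−j)=1 | A̲(K−m)=1_m) − P(A(K−1−j)=1 | A̲(K−m)=0_m)`. -/
def qcoef (P : Measure Ω) (A : Fin K → Ω → Bool) (m : ℕ) (j : Fin K) : ℝ :=
  cP P {ω | A (rev j) ω = true} (Etr A m true) -
    cP P {ω | A (rev j) ω = true} (Etr A m false)

end

noncomputable section

variable {Ω : Type*} [MeasurableSpace Ω] {K : ℕ}

/-- Concatenated regime `(b̄, a̲) ∈ {0,1}^K`: `b̄` on the coordinates before `K−m`,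
`a̲` on the last `m` coordinates. -/
def concatRegime (m : ℕ) (b : {k : Fin K // (k : ℕ) < K - m} → Bool)
    (as : Fin K → Bool) : Fin K → Bool :=
  fun k => if h : (k : ℕ) < K - m then b ⟨k, h⟩ else as k

/-- Event `Ā(K−m−1) = b̄` for a past history `b̄ ∈ {0,1}^{K−m}`. -/
def ApastV (A : Fin K → Ω → Bool) (m : ℕ)
    (b : {k : Fin K // (k : ℕ) < K - m} → Bool) : Set Ω :=
  {ω | ∀ (k : Fin K) (h : (k : ℕ) < K - m), A k ω = b ⟨k, h⟩}

end

/-! ### Auxiliary machinery for the proof -/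

noncomputable section Aux

variable {Ω : Type*} [MeasurableSpace Ω] {𝓛 : Type*} {K : ℕ}

/-- Event `L̄(t−1) = l̄` (covariates strictly before time `t`). -/
def LpastS (L : Fin K → Ω → 𝓛) (t : ℕ) (l : Fin K → 𝓛) : Set Ω :=
  {ω | ∀ k : Fin K, (k : ℕ) < t → L k ω = l k}

/-- Covariate histories supported (away from a default value) on coordinates `< t`. -/
def Sfin (𝓛 : Type*) [Fintype 𝓛] [Nonempty 𝓛] (K t : ℕ) : Finset (Fin K → 𝓛) :=
  Finset.univ.filter fun l => ∀ k : Fin K, t ≤ (k : ℕ) → l k = Classical.arbitrary 𝓛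

/-- Denominator factor of the stabilized weights, at regime `c` and covariate history `l`. -/
def denP (P : Measure Ω) (A : Fin K → Ω → Bool) (L : Fin K → Ω → 𝓛)
    (c : Fin K → Bool) (l : Fin K → 𝓛) (k : Fin K) : ℝ :=
  cP P {ω | A k ω = c k} (Lpast L (k : ℕ) l ∩ Apast A (k : ℕ) c)

/-- Numerator factor of the stabilized weights, at regime `c`. -/
def numP (P : Measure Ω) (A : Fin K → Ω → Bool) (c : Fin K → Bool) (k : Fin K) : ℝ :=
  cP P {ω | A k ω = c k} (Apast A (k : ℕ) c)

/-- The partially-integrated quantity appearing in the telescoping argument. -/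
def Phi (P : Measure Ω) [Fintype 𝓛] [Nonempty 𝓛] (A : Fin K → Ω → Bool)
    (L : Fin K → Ω → 𝓛) (c : Fin K → Bool) (YB : Set Ω) (s t : ℕ) : ℝ :=
  ∑ l ∈ Sfin 𝓛 K t,
    (∏ k ∈ Finset.univ.filter fun k : Fin K => s ≤ (k : ℕ) ∧ (k : ℕ) < t,
        denP P A L c l k)⁻¹ *
      (P (YB ∩ LpastS L t l ∩ Apast A t c)).toReal

lemma measurableSet_Apast (A : Fin K → Ω → Bool) (hA : ∀ k, Measurable (A k))
    (t : ℕ) (c : Fin K → Bool) : MeasurableSet (Apast A t c) := by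
  have h : Apast A t c = ⋂ (k : Fin K), ⋂ (_ : (k : ℕ) < t), A k ⁻¹' {c k} := by
    ext ω; simp [Apast]
  rw [h]
  exact MeasurableSet.iInter fun k => MeasurableSet.iInter fun _ =>
    (hA k) (measurableSet_singleton _)

lemma measurableSet_LpastS [MeasurableSpace 𝓛] [MeasurableSingletonClass 𝓛]
    (L : Fin K → Ω → 𝓛) (hL : ∀ k, Measurable (L k)) (t : ℕ) (l : Fin K → 𝓛) :
    MeasurableSet (LpastS L t l) := by
  have h : LpastS L t l = ⋂ (k : Fin K), ⋂ (_ : (k : ℕ) < t), L k ⁻¹' {l k} := by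
    ext ω; simp [LpastS]
  rw [h]
  exact MeasurableSet.iInter fun k => MeasurableSet.iInter fun _ =>
    (hL k) (measurableSet_singleton _)

lemma cP_mul_toReal (P : Measure Ω) [IsFiniteMeasure P] (E F : Set Ω) :
    cP P E F * (P F).toReal = (P (E ∩ F)).toReal := by
  unfold cP
  rcases eq_or_ne (P F) 0 with h | h
  · have h2 : P (E ∩ F) = 0 := measure_mono_null Set.inter_subset_right h
    simp [h, h2]
  · exact div_mul_cancel₀ _ (by
      rw [ENNReal.toReal_ne_zero]; exact ⟨h, measure_ne_top P F⟩)

lemma sum_fiber [MeasurableSpace 𝓛] [Fintype 𝓛] [MeasurableSingletonClass 𝓛]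
    (P : Measure Ω) [IsFiniteMeasure P] {E : Set Ω} (hE : MeasurableSet E)
    {g : Ω → 𝓛} (hg : Measurable g) :
    ∑ x : 𝓛, (P (E ∩ g ⁻¹' {x})).toReal = (P E).toReal := by
  have hU : E = ⋃ x ∈ (Finset.univ : Finset 𝓛), E ∩ g ⁻¹' {x} := by
    ext ω; simp
  have hd : ((Finset.univ : Finset 𝓛) : Set 𝓛).PairwiseDisjoint
      (fun x => E ∩ g ⁻¹' {x}) := by
    intro x _ y _ hxy
    refine Set.disjoint_left.2 fun ω hx hy => hxy ?_
    rw [← Set.mem_singleton_iff.1 hx.2, ← Set.mem_singleton_iff.1 hy.2]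
  have hm : ∀ x ∈ (Finset.univ : Finset 𝓛), MeasurableSet (E ∩ g ⁻¹' {x}) :=
    fun x _ => hE.inter (hg (measurableSet_singleton _))
  calc ∑ x : 𝓛, (P (E ∩ g ⁻¹' {x})).toReal
      = (∑ x : 𝓛, P (E ∩ g ⁻¹' {x})).toReal :=
        (ENNReal.toReal_sum (fun x _ => measure_ne_top _ _)).symm
    _ = (P E).toReal := by rw [← measure_biUnion_finset hd hm, ← hU]

lemma mem_Sfin [Fintype 𝓛] [Nonempty 𝓛] {t : ℕ} {l : Fin K → 𝓛} :
    l ∈ Sfin 𝓛 K t ↔ ∀ k : Fin K, t ≤ (k : ℕ) → l k = Classical.arbitrary 𝓛 := by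
  simp [Sfin]

lemma sum_Sfin_succ [Fintype 𝓛] [Nonempty 𝓛] {t : ℕ} (ht : t < K)
    (f : (Fin K → 𝓛) → ℝ) :
    ∑ l ∈ Sfin 𝓛 K (t + 1), f l =
      ∑ l ∈ Sfin 𝓛 K t, ∑ x : 𝓛, f (Function.update l ⟨t, ht⟩ x) := by
  rw [← Finset.sum_product']
  refine (Finset.sum_nbij'
    (i := fun l => (Function.update l ⟨t, ht⟩ (Classical.arbitrary 𝓛), l ⟨t, ht⟩))
    (j := fun p => Function.update p.1 ⟨t, ht⟩ p.2) ?_ ?_ ?_ ?_ ?_)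
  · intro l hl
    rw [Finset.mem_product]
    refine ⟨mem_Sfin.2 fun k hk => ?_, Finset.mem_univ _⟩
    show Function.update l ⟨t, ht⟩ (Classical.arbitrary 𝓛) k = Classical.arbitrary 𝓛
    by_cases hkt : k = ⟨t, ht⟩
    · subst hkt; rw [Function.update_self]
    · rw [Function.update_of_ne hkt]
      exact mem_Sfin.1 hl k (by
        have : (k : ℕ) ≠ t := fun h => hkt (Fin.ext h)
        omega)
  · intro p hp
    rw [Finset.mem_product] at hp
    refine mem_Sfin.2 fun k hk => ?_
    have hkt : k ≠ ⟨t, ht⟩ := by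
      intro h; subst h; simp at hk
    show Function.update p.1 ⟨t, ht⟩ p.2 k = Classical.arbitrary 𝓛
    rw [Function.update_of_ne hkt]
    exact mem_Sfin.1 hp.1 k (by omega)
  · intro l hl
    dsimp only
    rw [Function.update_idem, Function.update_eq_self]
  · intro p hp
    rw [Finset.mem_product] at hp
    have h1 : p.1 ⟨t, ht⟩ = Classical.arbitrary 𝓛 := mem_Sfin.1 hp.1 _ le_rfl
    refine Prod.ext ?_ ?_
    · dsimp only
      rw [Function.update_idem, ← h1, Function.update_eq_self]
    · dsimp only
      rw [Function.update_self]
  · intro l hl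
    dsimp only
    rw [Function.update_idem, Function.update_eq_self]

lemma Sfin_succ_of_ge [Fintype 𝓛] [Nonempty 𝓛] {t : ℕ} (ht : K ≤ t) :
    Sfin 𝓛 K (t + 1) = Sfin 𝓛 K t := by
  ext l
  simp only [mem_Sfin]
  constructor <;> intro _ k hk <;> exact absurd hk (by have := k.isLt; omega)

lemma LpastS_succ_of_ge {t : ℕ} (ht : K ≤ t) (L : Fin K → Ω → 𝓛) (l : Fin K → 𝓛) :
    LpastS L (t + 1) l = LpastS L t l := by
  ext ω
  constructor <;> intro h k _ <;> exact h k (by have := k.isLt; omega)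

lemma Apast_succ_of_ge {t : ℕ} (ht : K ≤ t) (A : Fin K → Ω → Bool) (c : Fin K → Bool) :
    Apast A (t + 1) c = Apast A t c := by
  ext ω
  constructor <;> intro h k _ <;> exact h k (by have := k.isLt; omega)

lemma Lpast_update {n : ℕ} (L : Fin K → Ω → 𝓛) {l : Fin K → 𝓛} {j : Fin K} {x : 𝓛}
    (h : n < (j : ℕ)) : Lpast L n (Function.update l j x) = Lpast L n l := by
  ext ω
  simp only [Lpast, Set.mem_setOf_eq]
  constructor <;> intro hh k hk
  · have := hh k hk
    rwa [Function.update_of_ne (by rintro rfl; omega)] at this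
  · rw [Function.update_of_ne (by rintro rfl; omega)]
    exact hh k hk

lemma sum_LpastS [MeasurableSpace 𝓛] [Fintype 𝓛] [Nonempty 𝓛] [MeasurableSingletonClass 𝓛]
    (P : Measure Ω) [IsFiniteMeasure P] (L : Fin K → Ω → 𝓛) (hL : ∀ k, Measurable (L k))
    {E : Set Ω} (hE : MeasurableSet E) (t : ℕ) :
    ∑ l ∈ Sfin 𝓛 K t, (P (E ∩ LpastS L t l)).toReal = (P E).toReal := by
  induction t with
  | zero =>
    have h1 : Sfin 𝓛 K 0 = {fun _ => Classical.arbitrary 𝓛} := by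
      ext l
      simp only [mem_Sfin, Finset.mem_singleton]
      constructor
      · intro h; funext k; exact h k (Nat.zero_le _)
      · intro h k _; rw [h]
    have h2 : LpastS L 0 (fun _ => Classical.arbitrary 𝓛) = (Set.univ : Set Ω) := by
      ext ω; simp [LpastS]
    simp [h1, h2]
  | succ t ih =>
    by_cases ht : t < K
    · rw [sum_Sfin_succ ht]
      rw [Finset.sum_congr rfl (fun l hl => ?_), ih]
      have hset : ∀ x : 𝓛, E ∩ LpastS L (t + 1) (Function.update l ⟨t, ht⟩ x) =
          (E ∩ LpastS L t l) ∩ (L ⟨t, ht⟩) ⁻¹' {x} := by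
        intro x
        ext ω
        simp only [LpastS, Set.mem_inter_iff, Set.mem_setOf_eq, Set.mem_preimage,
          Set.mem_singleton_iff]
        constructor
        · rintro ⟨hE', h⟩
          refine ⟨⟨hE', fun k hk => ?_⟩, ?_⟩
          · have h2 := h k (by omega)
            rwa [Function.update_of_ne (by
              intro he; subst he; simp at hk)] at h2
          · have h2 := h ⟨t, ht⟩ (by simp)
            rwa [Function.update_self] at h2
        · rintro ⟨⟨hE', h⟩, hx⟩
          refine ⟨hE', fun k hk => ?_⟩
          by_cases hkt : k = ⟨t, ht⟩
          · subst hkt; rwa [Function.update_self]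
          · rw [Function.update_of_ne hkt]
            exact h k (by
              have : (k : ℕ) ≠ t := fun h' => hkt (Fin.ext h')
              omega)
      simp_rw [hset]
      exact sum_fiber P (hE.inter (measurableSet_LpastS L hL t l)) (hL _)
    · push_neg at ht
      rw [Sfin_succ_of_ge ht]
      rw [Finset.sum_congr rfl fun l _ => by rw [LpastS_succ_of_ge ht]]
      exact ih

lemma Apast_succ (A : Fin K → Ω → Bool) (c : Fin K → Bool) {t : ℕ} (ht : t < K) :
    Apast A (t + 1) c = {ω | A ⟨t, ht⟩ ω = c ⟨t, ht⟩} ∩ Apast A t c := by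
  ext ω
  simp only [Apast, Set.mem_inter_iff, Set.mem_setOf_eq]
  constructor
  · intro h
    exact ⟨h ⟨t, ht⟩ (Nat.lt_succ_self t), fun j hj => h j (by omega)⟩
  · rintro ⟨h1, h2⟩ j hj
    by_cases hjt : (j : ℕ) < t
    · exact h2 j hjt
    · have hje : j = ⟨t, ht⟩ := Fin.ext (by simp only [Fin.val_mk]; omega)
      rw [hje]; exact h1

lemma Apast_antitone (A : Fin K → Ω → Bool) (c : Fin K → Bool) {t : ℕ} :
    Apast A (t + 1) c ⊆ Apast A t c := fun ω h k hk => h k (by omega)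

lemma num_chain (P : Measure Ω) [IsFiniteMeasure P] (A : Fin K → Ω → Bool)
    (c : Fin K → Bool) {s : ℕ} (hs : P (Apast A s c) ≠ 0) :
    ∀ t, s ≤ t → t ≤ K →
      ∏ k ∈ Finset.univ.filter (fun k : Fin K => s ≤ (k : ℕ) ∧ (k : ℕ) < t),
          numP P A c k
        = (P (Apast A t c)).toReal / (P (Apast A s c)).toReal := by
  have hsne : (P (Apast A s c)).toReal ≠ 0 := by
    rw [ENNReal.toReal_ne_zero]; exact ⟨hs, measure_ne_top P _⟩
  intro t hst
  induction t, hst using Nat.le_induction with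
  | base =>
    intro _
    have hfe : Finset.univ.filter (fun k : Fin K => s ≤ (k : ℕ) ∧ (k : ℕ) < s) = ∅ := by
      ext k; simp only [Finset.mem_filter, Finset.mem_univ, true_and,
        Finset.notMem_empty, iff_false]; omega
    rw [hfe, Finset.prod_empty, div_self hsne]
  | succ t hst ih =>
    intro htK
    have ht : t < K := by omega
    have hins : Finset.univ.filter (fun k : Fin K => s ≤ (k : ℕ) ∧ (k : ℕ) < t + 1) =
        insert ⟨t, ht⟩ (Finset.univ.filter (fun k : Fin K => s ≤ (k : ℕ) ∧ (k : ℕ) < t)) := by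
      ext k
      simp only [Finset.mem_filter, Finset.mem_univ, true_and, Finset.mem_insert,
        Fin.ext_iff, Fin.val_mk]
      omega
    rw [hins, Finset.prod_insert (by simp), ih (by omega)]
    have hAeq : {ω | A ⟨t, ht⟩ ω = c ⟨t, ht⟩} ∩ Apast A ((⟨t, ht⟩ : Fin K) : ℕ) c =
        Apast A (t + 1) c := (Apast_succ A c ht).symm
    unfold numP cP
    rw [hAeq]
    by_cases hPt : (P (Apast A t c)).toReal = 0
    · have hPt0 : P (Apast A t c) = 0 := by
        have := ENNReal.toReal_eq_zero_iff (P (Apast A t c))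
        rcases this.1 hPt with h | h
        · exact h
        · exact absurd h (measure_ne_top P _)
      have h1 : P (Apast A (t + 1) c) = 0 :=
        measure_mono_null (Apast_antitone A c) hPt0
      have hPtc : (P (Apast A ((⟨t, ht⟩ : Fin K) : ℕ) c)).toReal = 0 := hPt
      simp [h1, hPtc, hPt]
    · have hPtc : (P (Apast A ((⟨t, ht⟩ : Fin K) : ℕ) c)).toReal =
        (P (Apast A t c)).toReal := rfl
      rw [hPtc, div_mul_div_comm, mul_comm ((P (Apast A (t + 1) c)).toReal),
        mul_div_mul_left _ _ hPt]

lemma Phi_succ [MeasurableSpace 𝓛] [Fintype 𝓛] [Nonempty 𝓛] [MeasurableSingletonClass 𝓛]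
    (P : Measure Ω) [IsFiniteMeasure P] (A : Fin K → Ω → Bool) (L : Fin K → Ω → 𝓛)
    (hA : ∀ k, Measurable (A k)) (hL : ∀ k, Measurable (L k))
    (c : Fin K → Bool) (YB : Set Ω) (hYB : MeasurableSet YB)
    (hfac : ∀ (k : Fin K) (l : Fin K → 𝓛),
      (cP P {ω | A k ω = c k} (Lpast L (k : ℕ) l ∩ Apast A (k : ℕ) c))⁻¹ *
          (P ((YB ∩ {ω | A k ω = c k}) ∩ (Lpast L (k : ℕ) l ∩ Apast A (k : ℕ) c))).toReal =
        (P (YB ∩ (Lpast L (k : ℕ) l ∩ Apast A (k : ℕ) c))).toReal)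
    {s t : ℕ} (hst : s ≤ t) (ht : t < K) :
    Phi P A L c YB s (t + 1) = Phi P A L c YB s t := by
  unfold Phi
  rw [sum_Sfin_succ ht]
  refine Finset.sum_congr rfl fun l hl => ?_
  have hins : Finset.univ.filter (fun k : Fin K => s ≤ (k : ℕ) ∧ (k : ℕ) < t + 1) =
      insert ⟨t, ht⟩ (Finset.univ.filter (fun k : Fin K => s ≤ (k : ℕ) ∧ (k : ℕ) < t)) := by
    ext k
    simp only [Finset.mem_filter, Finset.mem_univ, true_and, Finset.mem_insert,
      Fin.ext_iff, Fin.val_mk]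
    omega
  have hnotmem : (⟨t, ht⟩ : Fin K) ∉
      Finset.univ.filter (fun k : Fin K => s ≤ (k : ℕ) ∧ (k : ℕ) < t) := by simp
  have hS : MeasurableSet (YB ∩ LpastS L t l ∩ Apast A t c) :=
    (hYB.inter (measurableSet_LpastS L hL t l)).inter (measurableSet_Apast A hA t c)
  have key : ∀ x : 𝓛,
      (∏ k ∈ Finset.univ.filter (fun k : Fin K => s ≤ (k : ℕ) ∧ (k : ℕ) < t + 1),
          denP P A L c (Function.update l ⟨t, ht⟩ x) k)⁻¹ *
        (P (YB ∩ LpastS L (t + 1) (Function.update l ⟨t, ht⟩ x) ∩ Apast A (t + 1) c)).toReal =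
      (∏ k ∈ Finset.univ.filter (fun k : Fin K => s ≤ (k : ℕ) ∧ (k : ℕ) < t),
          denP P A L c l k)⁻¹ *
        (P ((YB ∩ LpastS L t l ∩ Apast A t c) ∩ (L ⟨t, ht⟩) ⁻¹' {x})).toReal := by
    intro x
    have hden_eq : ∀ k ∈ Finset.univ.filter (fun k : Fin K => s ≤ (k : ℕ) ∧ (k : ℕ) < t),
        denP P A L c (Function.update l ⟨t, ht⟩ x) k = denP P A L c l k := by
      intro k hk
      obtain ⟨-, hklt⟩ := (Finset.mem_filter.1 hk).2
      unfold denP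
      rw [Lpast_update L (by simp only [Fin.val_mk]; omega)]
    have hev : YB ∩ LpastS L (t + 1) (Function.update l ⟨t, ht⟩ x) ∩ Apast A (t + 1) c =
        (YB ∩ {ω | A ⟨t, ht⟩ ω = c ⟨t, ht⟩}) ∩
          (Lpast L ((⟨t, ht⟩ : Fin K) : ℕ) (Function.update l ⟨t, ht⟩ x) ∩
            Apast A ((⟨t, ht⟩ : Fin K) : ℕ) c) := by
      ext ω
      simp only [LpastS, Lpast, Apast, Set.mem_inter_iff, Set.mem_setOf_eq, Fin.val_mk]
      constructor
      · rintro ⟨⟨hY, hLp⟩, hAp⟩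
        exact ⟨⟨hY, hAp ⟨t, ht⟩ (by simp)⟩,
          ⟨fun j hj => hLp j (by omega), fun j hj => hAp j (by omega)⟩⟩
      · rintro ⟨⟨hY, hAkt⟩, hLp, hAp⟩
        refine ⟨⟨hY, fun j hj => hLp j (by omega)⟩, fun j hj => ?_⟩
        by_cases hjt : (j : ℕ) < t
        · exact hAp j hjt
        · have hje : j = ⟨t, ht⟩ := Fin.ext (by simp only [Fin.val_mk]; omega)
          rw [hje]; exact hAkt
    have hLu : Lpast L ((⟨t, ht⟩ : Fin K) : ℕ) (Function.update l ⟨t, ht⟩ x) =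
        LpastS L t l ∩ (L ⟨t, ht⟩) ⁻¹' {x} := by
      ext ω
      simp only [Lpast, LpastS, Set.mem_inter_iff, Set.mem_setOf_eq, Set.mem_preimage,
        Set.mem_singleton_iff, Fin.val_mk]
      constructor
      · intro h
        refine ⟨fun k hk => ?_, ?_⟩
        · have h2 := h k (by omega)
          rwa [Function.update_of_ne (by
            intro he; subst he; simp at hk)] at h2
        · have h2 := h ⟨t, ht⟩ le_rfl
          rwa [Function.update_self] at h2
      · rintro ⟨h, hx⟩ k hk
        by_cases hkt : k = ⟨t, ht⟩
        · subst hkt; rwa [Function.update_self]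
        · rw [Function.update_of_ne hkt]
          exact h k (by
            have : (k : ℕ) ≠ t := fun h' => hkt (Fin.ext h')
            omega)
    rw [hins, Finset.prod_insert hnotmem, Finset.prod_congr rfl hden_eq, hev, mul_inv,
      mul_comm (denP P A L c (Function.update l ⟨t, ht⟩ x) ⟨t, ht⟩)⁻¹, mul_assoc]
    unfold denP
    rw [hfac ⟨t, ht⟩ (Function.update l ⟨t, ht⟩ x), hLu]
    have hre : YB ∩ (LpastS L t l ∩ (L ⟨t, ht⟩) ⁻¹' {x} ∩ Apast A ((⟨t, ht⟩ : Fin K) : ℕ) c) =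
        (YB ∩ LpastS L t l ∩ Apast A t c) ∩ (L ⟨t, ht⟩) ⁻¹' {x} := by
      ext ω
      simp only [Set.mem_inter_iff]
      constructor <;> intro h <;> tauto
    rw [hre]
  rw [Finset.sum_congr rfl fun x _ => key x, ← Finset.mul_sum,
    sum_fiber P hS (hL ⟨t, ht⟩)]

end Aux

/-- Conditional pseudo-population factorization for partial stabilized weights
(equation (B.4.1)): under (A2) and (A3), after weighting by `W_psw^(m)`, the potential
outcome `Y^{(b̄,a̲)}` and the recent treatment history `A̲(K−m)` are conditionally
independent given the past treatment history `Ā(K−m−1) = b̄`, with the original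
conditional marginal distributions. -/
theorem psw_conditional_pseudopopulation_factorization
    {Ω : Type*} [MeasurableSpace Ω] {𝓛 : Type*} [MeasurableSpace 𝓛]
    [Fintype 𝓛] [Nonempty 𝓛] [MeasurableSingletonClass 𝓛]
    (P : Measure Ω) [IsProbabilityMeasure P]
    {K m : ℕ} (hK : 1 ≤ K) (hm1 : 1 ≤ m) (hmK : m ≤ K)
    (A : Fin K → Ω → Bool) (L : Fin K → Ω → 𝓛)
    (hA : ∀ k, Measurable (A k)) (hL : ∀ k, Measurable (L k))
    (Ypot : (Fin K → Bool) → Ω → ℝ)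
    (hYpm : ∀ a, Measurable (Ypot a)) (hYpi : ∀ a, Integrable (Ypot a) P)
    (hA2 : A2ok P A L Ypot) (hA3 : A3ok P A L) :
    ∀ b : {k : Fin K // (k : ℕ) < K - m} → Bool, 0 < P (ApastV A m b) →
    ∀ (as bs : Fin K → Bool) (B : Set ℝ), MeasurableSet B →
      (∫ ω, Wpsw P A L m ω *
          (if Ypot (concatRegime m b as) ω ∈ B then (1 : ℝ) else 0) *
          (if ω ∈ EtrV A m bs then (1 : ℝ) else 0) *
          (if ω ∈ ApastV A m b then (1 : ℝ) else 0) ∂P) =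
        cP P {ω | Ypot (concatRegime m b as) ω ∈ B} (ApastV A m b) *
          cP P (EtrV A m bs) (ApastV A m b) * (P (ApastV A m b)).toReal := by
  intro b hb as bs B hB
  set c : Fin K → Bool := concatRegime m b bs with hc
  set YB : Set Ω := {ω | Ypot (concatRegime m b as) ω ∈ B} with hYBdef
  have hYBm : MeasurableSet YB := hYpm (concatRegime m b as) hB
  -- basic facts about the regime `c`
  have hck : ∀ (k : Fin K) (hk : (k : ℕ) < K - m), c k = b ⟨k, hk⟩ := by
    intro k hk; simp [hc, concatRegime, hk]
  have hck2 : ∀ (k : Fin K), K - m ≤ (k : ℕ) → c k = bs k := by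
    intro k hk; simp only [hc, concatRegime]; rw [dif_neg (by omega)]
  have hApV : Apast A (K - m) c = ApastV A m b := by
    ext ω
    simp only [Apast, ApastV, Set.mem_setOf_eq]
    constructor
    · intro h k hk
      have h2 := h k hk
      rwa [hck k hk] at h2
    · intro h k hk
      rw [hck k hk]
      exact h k hk
  have hAKc : EtrV A m bs ∩ ApastV A m b = Apast A K c := by
    ext ω
    simp only [EtrV, ApastV, Apast, Set.mem_inter_iff, Set.mem_setOf_eq]
    constructor
    · rintro ⟨h1, h2⟩ k _
      by_cases hk : (k : ℕ) < K - m
      · rw [hck k hk]; exact h2 k hk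
      · rw [hck2 k (by omega)]; exact h1 k (by omega)
    · intro h
      constructor
      · intro k hk; rw [← hck2 k hk]; exact h k k.isLt
      · intro k hk; rw [← hck k hk]; exact h k k.isLt
  have hbne : P (Apast A (K - m) c) ≠ 0 := by rw [hApV]; exact hb.ne'
  have hPAne : (P (Apast A (K - m) c)).toReal ≠ 0 := by
    rw [ENNReal.toReal_ne_zero]; exact ⟨hbne, measure_ne_top P _⟩
  -- the factorization/cancellation step from (A2) and (A3)
  have hfac : ∀ (k : Fin K) (l : Fin K → 𝓛),
      (cP P {ω | A k ω = c k} (Lpast L (k : ℕ) l ∩ Apast A (k : ℕ) c))⁻¹ *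
          (P ((YB ∩ {ω | A k ω = c k}) ∩ (Lpast L (k : ℕ) l ∩ Apast A (k : ℕ) c))).toReal =
        (P (YB ∩ (Lpast L (k : ℕ) l ∩ Apast A (k : ℕ) c))).toReal := by
    intro k l
    rcases eq_or_ne (P (Lpast L (k : ℕ) l ∩ Apast A (k : ℕ) c)) 0 with h0 | hne0
    · rw [measure_mono_null Set.inter_subset_right h0,
        measure_mono_null Set.inter_subset_right h0]
      simp
    · have hFpos : 0 < P (Lpast L (k : ℕ) l ∩ Apast A (k : ℕ) c) :=
        pos_iff_ne_zero.2 hne0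
      have h2 := hA2 k (concatRegime m b as) B hB (c k) l c hFpos
      have h3 := hA3 k (c k) l c hFpos
      rw [← hYBdef] at h2
      have e1 : (P ((YB ∩ {ω | A k ω = c k}) ∩ (Lpast L (k : ℕ) l ∩ Apast A (k : ℕ) c))).toReal
          = cP P (YB ∩ {ω | A k ω = c k}) (Lpast L (k : ℕ) l ∩ Apast A (k : ℕ) c) *
            (P (Lpast L (k : ℕ) l ∩ Apast A (k : ℕ) c)).toReal := (cP_mul_toReal P _ _).symm
      have e2 : cP P YB (Lpast L (k : ℕ) l ∩ Apast A (k : ℕ) c) *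
            (P (Lpast L (k : ℕ) l ∩ Apast A (k : ℕ) c)).toReal
          = (P (YB ∩ (Lpast L (k : ℕ) l ∩ Apast A (k : ℕ) c))).toReal := cP_mul_toReal P _ _
      rw [e1, h2, ← e2]
      have hne3 : cP P {ω | A k ω = c k} (Lpast L (k : ℕ) l ∩ Apast A (k : ℕ) c) ≠ 0 :=
        ne_of_gt h3
      field_simp
  -- the integrand as a finite sum of weighted indicators
  have hfilteq : (Finset.univ.filter fun k : Fin K => K - m ≤ (k : ℕ) ∧ (k : ℕ) < K) =
      Finset.univ.filter fun k : Fin K => K - m ≤ (k : ℕ) := by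
    ext k
    simp only [Finset.mem_filter, Finset.mem_univ, true_and, and_iff_left_iff_imp]
    intro _
    exact k.isLt
  have hintegrand : ∀ ω, Wpsw P A L m ω *
        (if Ypot (concatRegime m b as) ω ∈ B then (1 : ℝ) else 0) *
        (if ω ∈ EtrV A m bs then (1 : ℝ) else 0) *
        (if ω ∈ ApastV A m b then (1 : ℝ) else 0) =
      ∑ l ∈ Sfin 𝓛 K K,
        (YB ∩ LpastS L K l ∩ Apast A K c).indicator
          (fun _ => ∏ k ∈ Finset.univ.filter fun k : Fin K => K - m ≤ (k : ℕ),
            (numP P A c k / denP P A L c l k)) ω := by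
    intro ω
    have hl0mem : (fun j => L j ω) ∈ Sfin 𝓛 K K :=
      mem_Sfin.2 fun k hk => absurd hk (by have := k.isLt; omega)
    rw [Finset.sum_eq_single (fun j => L j ω) ?_ ?_]
    rotate_left
    · intro l _ hne
      apply Set.indicator_of_notMem
      rintro ⟨⟨_, hLp⟩, _⟩
      exact hne (funext fun j => (hLp j j.isLt).symm)
    · intro h; exact absurd hl0mem h
    have hωLp : ω ∈ LpastS L K (fun j => L j ω) := fun j _ => rfl
    by_cases hωA : ω ∈ Apast A K c
    · have hAω : ∀ j, A j ω = c j := fun j => hωA j j.isLt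
      have hfun : (fun j => A j ω) = c := funext hAω
      have hE1 : ω ∈ EtrV A m bs := fun k hk => by rw [hAω k, hck2 k hk]
      have hE2 : ω ∈ ApastV A m b := fun k hk => by rw [hAω k, hck k hk]
      have hW : Wpsw P A L m ω =
          ∏ k ∈ Finset.univ.filter fun k : Fin K => K - m ≤ (k : ℕ),
            (numP P A c k / denP P A L c (fun j => L j ω) k) := by
        unfold Wpsw numP denP
        refine Finset.prod_congr rfl fun k _ => ?_
        rw [hAω k, hfun]
      by_cases hY : Ypot (concatRegime m b as) ω ∈ B
      · rw [Set.indicator_of_mem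
          (show ω ∈ YB ∩ LpastS L K (fun j => L j ω) ∩ Apast A K c from ⟨⟨hY, hωLp⟩, hωA⟩), hW]
        simp [hE1, hE2, hY]
      · rw [Set.indicator_of_notMem (fun hmem => hY hmem.1.1)]
        simp [hY]
    · rw [Set.indicator_of_notMem (fun hmem => hωA hmem.2)]
      have hnand : ¬ (ω ∈ EtrV A m bs ∧ ω ∈ ApastV A m b) := by
        rintro ⟨h1, h2⟩
        exact hωA (hAKc ▸ (Set.mem_inter h1 h2))
      by_cases h1 : ω ∈ EtrV A m bs
      · have h2 : ω ∉ ApastV A m b := fun h2 => hnand ⟨h1, h2⟩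
        simp [h2]
      · simp [h1]
  -- compute the integral
  have hmeasl : ∀ l : Fin K → 𝓛, MeasurableSet (YB ∩ LpastS L K l ∩ Apast A K c) :=
    fun l => (hYBm.inter (measurableSet_LpastS L hL K l)).inter
      (measurableSet_Apast A hA K c)
  have hint : (∫ ω, Wpsw P A L m ω *
        (if Ypot (concatRegime m b as) ω ∈ B then (1 : ℝ) else 0) *
        (if ω ∈ EtrV A m bs then (1 : ℝ) else 0) *
        (if ω ∈ ApastV A m b then (1 : ℝ) else 0) ∂P) =
      ∑ l ∈ Sfin 𝓛 K K,
        (P (YB ∩ LpastS L K l ∩ Apast A K c)).toReal *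
          ∏ k ∈ Finset.univ.filter fun k : Fin K => K - m ≤ (k : ℕ),
            (numP P A c k / denP P A L c l k) := by
    simp only [hintegrand]
    rw [MeasureTheory.integral_finset_sum _
      (fun l _ => (integrable_const _).indicator (hmeasl l))]
    refine Finset.sum_congr rfl fun l _ => ?_
    rw [MeasureTheory.integral_indicator_const _ (hmeasl l), smul_eq_mul]
    rfl
  -- rewrite as (product of numerators) * Phi
  have hsum : ∑ l ∈ Sfin 𝓛 K K,
        (P (YB ∩ LpastS L K l ∩ Apast A K c)).toReal *
          ∏ k ∈ Finset.univ.filter fun k : Fin K => K - m ≤ (k : ℕ),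
            (numP P A c k / denP P A L c l k) =
      (∏ k ∈ Finset.univ.filter fun k : Fin K => K - m ≤ (k : ℕ), numP P A c k) *
        Phi P A L c YB (K - m) K := by
    unfold Phi
    rw [Finset.mul_sum]
    refine Finset.sum_congr rfl fun l _ => ?_
    rw [hfilteq, Finset.prod_div_distrib]
    rw [div_eq_mul_inv]
    ring
  -- telescoping
  have hPhi : Phi P A L c YB (K - m) K = Phi P A L c YB (K - m) (K - m) := by
    have step : ∀ j, K - m + j ≤ K →
        Phi P A L c YB (K - m) (K - m + j) = Phi P A L c YB (K - m) (K - m) := by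
      intro j
      induction j with
      | zero => intro _; rfl
      | succ j ih =>
        intro hj
        have : K - m + (j + 1) = (K - m + j) + 1 := rfl
        rw [this, Phi_succ P A L hA hL c YB hYBm hfac (Nat.le_add_right _ _) (by omega)]
        exact ih (by omega)
    have h := step m (by omega)
    rwa [show K - m + m = K by omega] at h
  have hPhiBase : Phi P A L c YB (K - m) (K - m) =
      (P (YB ∩ Apast A (K - m) c)).toReal := by
    unfold Phi
    have hempty : (Finset.univ.filter fun k : Fin K =>
        K - m ≤ (k : ℕ) ∧ (k : ℕ) < K - m) = ∅ := by
      ext k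
      simp only [Finset.mem_filter, Finset.mem_univ, true_and, Finset.notMem_empty,
        iff_false]
      omega
    simp only [hempty, Finset.prod_empty, inv_one, one_mul]
    have hcomm : ∀ l : Fin K → 𝓛, YB ∩ LpastS L (K - m) l ∩ Apast A (K - m) c =
        (YB ∩ Apast A (K - m) c) ∩ LpastS L (K - m) l :=
      fun l => Set.inter_right_comm _ _ _
    simp_rw [hcomm]
    exact sum_LpastS P L hL (hYBm.inter (measurableSet_Apast A hA (K - m) c)) (K - m)
  -- the chain rule for the numerators
  have hnum : (∏ k ∈ Finset.univ.filter fun k : Fin K => K - m ≤ (k : ℕ), numP P A c k) =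
      (P (Apast A K c)).toReal / (P (Apast A (K - m) c)).toReal := by
    rw [← hfilteq]
    exact num_chain P A c hbne K (by omega) le_rfl
  -- assemble
  rw [hint, hsum, hPhi, hPhiBase, hnum]
  show _ = cP P YB (ApastV A m b) * cP P (EtrV A m bs) (ApastV A m b) *
    (P (ApastV A m b)).toReal
  unfold cP
  rw [← hApV, ← hAKc, hApV]
  have hPAne' : (P (ApastV A m b)).toReal ≠ 0 := by rw [← hApV]; exact hPAne
  field_simp

end MSMPaper
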